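/- Split conformal prediction is valid: let (X_1,Y_1), ..., (X_n,Y_n), (X_{n+1},Y_{n+1}) be exchangeable random pairs in X × Y with Y finite, let s : X × Y → ℝ be any measurable score function, and define the prediction set C(x) = { y ∈ Y : s(x,y) ≤ Q_α } where Q_α is the ⌈(1-α)(n+1)⌉-th smallest element of {s(X_1,Y_1), ..., s(X_n,Y_n)} ∪ {∞}. Then P[Y_{n+1} ∈ C(X_{n+1})] ≥ 1 - α. -/

import Mathlib

open MeasureTheory ProbabilityTheory
open scoped ENNReal

/-- The `k`-th smallest element of a finite multiset of extended reals
(i.e. the `k`-th order statistic, 1-indexed). -/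
noncomputable def kthSmallest (s : Multiset EReal) (k : ℕ) : EReal :=
  (s.sort (· ≤ ·)).getD (k - 1) ⊤



open List in
lemma sorted_rel_getElem {l : List EReal} (hl : l.Pairwise (· ≤ ·))
    {i j : ℕ} (hij : i ≤ j) (hj : j < l.length) : l[i]'(lt_of_le_of_lt hij hj) ≤ l[j] := by
  rcases Nat.eq_or_lt_of_le hij with h | h
  · subst h; exact le_refl _
  · exact List.pairwise_iff_getElem.1 hl i j (lt_of_le_of_lt hij hj) hj h

open List in
lemma sorted_countP_lt_getElem_le {l : List EReal} (hl : l.Pairwise (· ≤ ·))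
    (i : ℕ) (hi : i < l.length) :
    l.countP (fun x => decide (x < l[i])) ≤ i := by
  have h0 : (l.drop i).countP (fun x => decide (x < l[i])) = 0 := by
    rw [List.countP_eq_zero]
    intro a ha
    obtain ⟨m, hm, rfl⟩ := List.mem_iff_getElem.1 ha
    have hm2 : m < l.length - i := by simpa [List.length_drop] using hm
    have hm' : i + m < l.length := by omega
    rw [List.getElem_drop]
    simp only [decide_eq_true_eq, not_lt]
    exact sorted_rel_getElem hl (Nat.le_add_right i m) hm'
  have key : l.countP (fun x => decide (x < l[i]))
      = (l.take i).countP (fun x => decide (x < l[i]))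
        + (l.drop i).countP (fun x => decide (x < l[i])) := by
    rw [← List.countP_append, List.take_append_drop]
  rw [key, h0, Nat.add_zero]
  exact List.countP_le_length.trans (by simp)

open List in
lemma countP_lt_of_getElem_lt {l : List EReal} (hl : l.Pairwise (· ≤ ·)) {c : EReal}
    {i : ℕ} (hi : i < l.length) (h : l[i] < c) :
    i + 1 ≤ l.countP (fun x => decide (x < c)) := by
  have key : l.countP (fun x => decide (x < c))
      = (l.take (i+1)).countP (fun x => decide (x < c))
        + (l.drop (i+1)).countP (fun x => decide (x < c)) := by
    rw [← List.countP_append, List.take_append_drop]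
  have hall : (l.take (i+1)).countP (fun x => decide (x < c)) = (l.take (i+1)).length := by
    rw [List.countP_eq_length]
    intro a ha
    obtain ⟨m, hm, rfl⟩ := List.mem_iff_getElem.1 ha
    have hmlt : m ≤ i := by simp [List.length_take] at hm; omega
    rw [List.getElem_take]
    simp only [decide_eq_true_eq]
    exact lt_of_le_of_lt (sorted_rel_getElem hl hmlt hi) h
  have hlen : (l.take (i+1)).length = i + 1 := by simp [List.length_take]; omega
  rw [key, hall, hlen]
  omega

lemma countP_sort_eq (M : Multiset EReal) (p : EReal → Prop) [DecidablePred p] :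
    M.countP p = (M.sort (· ≤ ·)).countP (fun x => decide (p x)) := by
  conv_lhs => rw [← Multiset.sort_eq M (· ≤ ·)]
  rfl

lemma le_kthSmallest_iff (M : Multiset EReal) (k : ℕ) (hk1 : 1 ≤ k)
    (hk2 : k ≤ Multiset.card M) (c : EReal) :
    c ≤ kthSmallest M k ↔ M.countP (fun x => x < c) < k := by
  set l := M.sort (· ≤ ·) with hldef
  have hsort : l.Pairwise (· ≤ ·) := Multiset.pairwise_sort _ _
  have hlen : l.length = Multiset.card M := Multiset.length_sort _
  have hcount : M.countP (fun x => x < c) = l.countP (fun x => decide (x < c)) :=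
    countP_sort_eq M _
  have hkl : k - 1 < l.length := by omega
  have hget : kthSmallest M k = l[k-1] := List.getD_eq_getElem l ⊤ hkl
  rw [hget, hcount]
  constructor
  · intro h
    have h1 : l.countP (fun x => decide (x < c)) ≤ l.countP (fun x => decide (x < l[k-1])) := by
      apply List.countP_mono_left
      intro a _ ha
      simp only [decide_eq_true_eq] at ha ⊢
      exact lt_of_lt_of_le ha h
    have h2 := sorted_countP_lt_getElem_le hsort (k-1) hkl
    omega
  · intro h
    by_contra hc
    push_neg at hc
    have := countP_lt_of_getElem_lt hsort hkl hc
    omega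

lemma rank_countP (M : Multiset EReal) (k : ℕ) (hk : k ≤ Multiset.card M) :
    k ≤ M.countP (fun a => M.countP (fun x => x < a) < k) := by
  set l := M.sort (· ≤ ·) with hldef
  have hsort : l.Pairwise (· ≤ ·) := Multiset.pairwise_sort _ _
  have hlen : l.length = Multiset.card M := Multiset.length_sort _
  rw [countP_sort_eq M _, ← hldef]
  have key : l.countP (fun a => decide (M.countP (fun x => x < a) < k))
      = (l.take k).countP (fun a => decide (M.countP (fun x => x < a) < k))
        + (l.drop k).countP (fun a => decide (M.countP (fun x => x < a) < k)) := by
    rw [← List.countP_append, List.take_append_drop]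
  rw [key]
  have hall : (l.take k).countP (fun a => decide (M.countP (fun x => x < a) < k))
      = (l.take k).length := by
    rw [List.countP_eq_length]
    intro a ha
    obtain ⟨m, hm, rfl⟩ := List.mem_iff_getElem.1 ha
    have hmk : m < k := by simp [List.length_take] at hm; omega
    have hml : m < l.length := by simp [List.length_take] at hm; omega
    rw [List.getElem_take]
    simp only [decide_eq_true_eq]
    have := sorted_countP_lt_getElem_le hsort m hml
    rw [countP_sort_eq M _, ← hldef]
    omega
  have hlen2 : (l.take k).length = k := by simp [List.length_take]; omega
  omega

lemma countP_ofFn {m : ℕ} (g : Fin m → EReal) (p : EReal → Prop) [DecidablePred p] :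
    (Multiset.ofList (List.ofFn g)).countP p = (Finset.univ.filter (fun j => p (g j))).card := by
  rw [List.ofFn_eq_map]
  rw [show (Multiset.ofList ((List.finRange m).map g))
        = Multiset.map g ((Finset.univ : Finset (Fin m)).val) from rfl]
  rw [Multiset.countP_map]
  rfl


/-- A finite family of random variables is exchangeable if its joint law is
invariant under every permutation of the indices. -/
def Exchangeable {Ω : Type*} [MeasureSpace Ω] {m : ℕ} {E : Type*} [MeasurableSpace E]
    (s : Fin m → Ω → E) : Prop :=
  ∀ π : Equiv.Perm (Fin m),
    Measure.map (fun ω i => s (π i) ω) (ℙ : Measure Ω) =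
      Measure.map (fun ω i => s i ω) (ℙ : Measure Ω)

theorem stmt4 {Ω : Type*} [MeasureSpace Ω] [IsProbabilityMeasure (ℙ : Measure Ω)]
    {X Y : Type*} [MeasurableSpace X] [MeasurableSpace Y] [Fintype Y]
    (n : ℕ) (Z : Fin (n + 1) → Ω → X × Y)
    (hmeas : ∀ i, Measurable (Z i)) (hexch : Exchangeable Z)
    (s : X × Y → ℝ) (hs : Measurable s)
    (α : ℝ) (hα : α ∈ Set.Ioo (0 : ℝ) 1)
    -- conformal prediction set: `C ω x = {y : s(x,y) ≤ Q_α(calibration scores of ω)}`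
    (C : Ω → X → Set Y)
    (hC : ∀ ω x, C ω x =
      {y : Y | (s (x, y) : EReal) ≤
        kthSmallest
          ((Multiset.ofList (List.ofFn fun i : Fin n => ((s (Z i.castSucc ω) : ℝ) : EReal)))
            + {⊤})
          ⌈(1 - α) * (n + 1)⌉₊}) :
    ENNReal.ofReal (1 - α) ≤
      ℙ {ω | (Z (Fin.last n) ω).2 ∈ C ω (Z (Fin.last n) ω).1} := by
  classical
  obtain ⟨hα0, hα1⟩ := hα
  set k := ⌈(1 - α) * (n + 1)⌉₊ with hkdef
  have hx0 : (0:ℝ) < (1 - α) * (n + 1) := by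
    apply mul_pos (by linarith) (by positivity)
  have hk1 : 1 ≤ k := Nat.one_le_iff_ne_zero.2 (Nat.ceil_pos.2 hx0).ne'
  have hkn : k ≤ n + 1 := by
    rw [hkdef]
    apply Nat.ceil_le.2
    push_cast
    nlinarith [mul_nonneg (le_of_lt hα0) (show (0:ℝ) ≤ (n:ℝ)+1 by positivity)]
  -- the joint random vector and the rank events
  set V : Ω → Fin (n+1) → X × Y := fun ω i => Z i ω with hVdef
  have hV : Measurable V := measurable_pi_lambda _ hmeas
  set B : Fin (n+1) → Set (Fin (n+1) → X × Y) :=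
    fun i => {v | (Finset.univ.filter (fun j => s (v j) < s (v i))).card < k} with hBdef
  have hBmeas : ∀ i, MeasurableSet (B i) := by
    intro i
    have hm : ∀ j, Measurable (fun v : Fin (n+1) → X × Y => s (v j)) :=
      fun j => hs.comp (measurable_pi_apply j)
    have hcard : Measurable (fun v : Fin (n+1) → X × Y =>
        (Finset.univ.filter (fun j => s (v j) < s (v i))).card) := by
      simp only [Finset.card_filter]
      apply Finset.measurable_sum
      intro j _
      exact Measurable.ite (measurableSet_lt (hm j) (hm i)) measurable_const measurable_const
    exact measurableSet_lt hcard measurable_const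
  set A : Fin (n+1) → Set Ω := fun i => V ⁻¹' B i with hAdef
  have hAmeas : ∀ i, MeasurableSet (A i) := fun i => hV (hBmeas i)
  -- exchangeability: all rank events have the same probability
  have hAeq : ∀ i, ℙ (A i) = ℙ (A (Fin.last n)) := by
    intro i
    have hmapV : ∀ (E : Set (Fin (n+1) → X × Y)), MeasurableSet E →
        ℙ (V ⁻¹' E) = Measure.map V ℙ E :=
      fun E hE => (Measure.map_apply hV hE).symm
    set π := Equiv.swap i (Fin.last n) with hπ
    have hσ : Measurable (fun v : Fin (n+1) → X × Y => v ∘ π) :=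
      measurable_pi_lambda _ (fun j => measurable_pi_apply (π j))
    have hcomp : (fun ω j => Z (π j) ω) = (fun v : Fin (n+1) → X × Y => v ∘ π) ∘ V := rfl
    have hinv : Measure.map (fun v : Fin (n+1) → X × Y => v ∘ π) (Measure.map V ℙ)
        = Measure.map V ℙ := by
      rw [Measure.map_map hσ hV, ← hcomp]
      exact hexch π
    have hpre : (fun v : Fin (n+1) → X × Y => v ∘ π) ⁻¹' (B i) = B (Fin.last n) := by
      ext v
      simp only [hBdef, Set.mem_preimage, Set.mem_setOf_eq, Function.comp_apply]
      have hπi : π i = Fin.last n := Equiv.swap_apply_left _ _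
      have hcard : (Finset.univ.filter (fun j => s (v (π j)) < s (v (π i)))).card
          = (Finset.univ.filter (fun j => s (v j) < s (v (π i)))).card := by
        apply Finset.card_bij' (fun j _ => π j) (fun j _ => π.symm j) <;> simp
      rw [hcard]
      simp only [hπi]
    calc ℙ (A i) = Measure.map V ℙ (B i) := hmapV _ (hBmeas i)
      _ = Measure.map (fun v : Fin (n+1) → X × Y => v ∘ π) (Measure.map V ℙ) (B i) := by
          rw [hinv]
      _ = Measure.map V ℙ ((fun v : Fin (n+1) → X × Y => v ∘ π) ⁻¹' (B i)) :=
          Measure.map_apply hσ (hBmeas i)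
      _ = Measure.map V ℙ (B (Fin.last n)) := by rw [hpre]
      _ = ℙ (A (Fin.last n)) := (hmapV _ (hBmeas (Fin.last n))).symm
  -- pointwise: at least k of the rank events hold
  have hpoint : ∀ ω, k ≤ (Finset.univ.filter (fun i => ω ∈ A i)).card := by
    intro ω
    set g : Fin (n+1) → EReal := fun j => ((s (Z j ω) : ℝ) : EReal) with hgdef
    set M : Multiset EReal := Multiset.ofList (List.ofFn g) with hMdef
    have hcard : Multiset.card M = n + 1 := by simp [hMdef]
    have h0 := rank_countP M k (by omega)
    rw [hMdef, countP_ofFn g _] at h0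
    refine le_trans h0 (le_of_eq ?_)
    congr 1
    apply Finset.filter_congr
    intro i _
    rw [← hMdef, hMdef, countP_ofFn g _]
    simp only [hAdef, hBdef, hVdef, Set.mem_preimage, Set.mem_setOf_eq, hgdef,
      EReal.coe_lt_coe_iff]
  -- integrate
  have hsum : (k : ℝ≥0∞) ≤ ∑ i, ℙ (A i) := by
    have h1 : ∀ ω, (k:ℝ≥0∞) ≤ ∑ i, (A i).indicator (fun _ => (1:ℝ≥0∞)) ω := by
      intro ω
      have h2 := hpoint ω
      have h3 : ((Finset.univ.filter (fun i => ω ∈ A i)).card : ℝ≥0∞)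
          = ∑ i, (A i).indicator (fun _ => (1:ℝ≥0∞)) ω := by
        rw [Finset.card_filter]
        push_cast
        refine Finset.sum_congr rfl fun i _ => ?_
        by_cases h : ω ∈ A i <;> simp [h, Set.indicator_apply]
      rw [← h3]
      exact_mod_cast Nat.cast_le.2 h2
    calc (k:ℝ≥0∞) = ∫⁻ _, (k:ℝ≥0∞) ∂ℙ := by simp
      _ ≤ ∫⁻ ω, ∑ i, (A i).indicator (fun _ => (1:ℝ≥0∞)) ω ∂ℙ := lintegral_mono h1
      _ = ∑ i, ∫⁻ ω, (A i).indicator (fun _ => (1:ℝ≥0∞)) ω ∂ℙ :=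
          lintegral_finset_sum _ (fun i _ => (measurable_const.indicator (hAmeas i)))
      _ = ∑ i, ℙ (A i) := by
          refine Finset.sum_congr rfl fun i _ => ?_
          rw [lintegral_indicator_const (hAmeas i), one_mul]
  have hmain : (k:ℝ≥0∞) ≤ ((n:ℝ≥0∞)+1) * ℙ (A (Fin.last n)) := by
    refine hsum.trans (le_of_eq ?_)
    rw [Finset.sum_congr rfl (fun i _ => hAeq i), Finset.sum_const, Finset.card_univ,
      Fintype.card_fin, nsmul_eq_mul]
    push_cast
    ring
  -- the conformal event is exactly the last rank event
  have htarget : {ω | (Z (Fin.last n) ω).2 ∈ C ω (Z (Fin.last n) ω).1} = A (Fin.last n) := by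
    ext ω
    set c : EReal := ((s (Z (Fin.last n) ω) : ℝ) : EReal) with hcdef
    set cal : Multiset EReal :=
      Multiset.ofList (List.ofFn fun i : Fin n => ((s (Z i.castSucc ω) : ℝ) : EReal)) with hcal
    have hccal : Multiset.card (cal + ({⊤} : Multiset EReal)) = n + 1 := by simp [hcal]
    have hL : (Z (Fin.last n) ω).2 ∈ C ω (Z (Fin.last n) ω).1
        ↔ Multiset.countP (fun x => x < c) cal < k := by
      rw [hC ω]
      simp only [Set.mem_setOf_eq]
      rw [show ((Z (Fin.last n) ω).1, (Z (Fin.last n) ω).2) = Z (Fin.last n) ω from rfl]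
      rw [le_kthSmallest_iff _ k hk1 (by rw [hccal]; exact hkn) c]
      rw [Multiset.countP_add]
      have h4 : Multiset.countP (fun x => x < c) ({⊤} : Multiset EReal) = 0 := by
        rw [show ({⊤} : Multiset EReal) = ⊤ ::ₘ 0 from rfl, Multiset.countP_cons]
        simp [not_top_lt]
      rw [h4, Nat.add_zero]
    have hMfull : Multiset.ofList (List.ofFn (fun j : Fin (n+1) => ((s (Z j ω) : ℝ) : EReal)))
        = cal + {c} := by
      rw [List.ofFn_succ']
      simp only [List.concat_eq_append]
      rfl
    have hR : ω ∈ A (Fin.last n) ↔ Multiset.countP (fun x => x < c) cal < k := by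
      simp only [hAdef, hBdef, hVdef, Set.mem_preimage, Set.mem_setOf_eq]
      rw [show (Finset.univ.filter (fun j => s (Z j ω) < s (Z (Fin.last n) ω))).card
            = Multiset.countP (fun x => x < c)
                (Multiset.ofList (List.ofFn (fun j : Fin (n+1) => ((s (Z j ω) : ℝ) : EReal))))
          from by rw [countP_ofFn]; congr 1; apply Finset.filter_congr; intro j _;
                  simp [hcdef, EReal.coe_lt_coe_iff]]
      rw [hMfull, Multiset.countP_add]
      have h5 : Multiset.countP (fun x => x < c) ({c} : Multiset EReal) = 0 := by
        rw [show ({c} : Multiset EReal) = c ::ₘ 0 from rfl, Multiset.countP_cons]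
        simp [lt_irrefl]
      rw [h5, Nat.add_zero]
    simp only [Set.mem_setOf_eq]
    rw [hL, hR]
  rw [htarget]
  -- final arithmetic
  have hfin : ENNReal.ofReal (1-α) * ((n:ℝ≥0∞)+1) ≤ (k:ℝ≥0∞) := by
    have hn1 : ENNReal.ofReal ((n:ℝ)+1) = (n:ℝ≥0∞)+1 := by
      rw [ENNReal.ofReal_add (by positivity) zero_le_one, ENNReal.ofReal_natCast,
        ENNReal.ofReal_one]
    have he : ENNReal.ofReal (1-α) * ((n:ℝ≥0∞)+1) = ENNReal.ofReal ((1-α) * ((n:ℝ)+1)) := by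
      rw [ENNReal.ofReal_mul (by linarith), hn1]
    rw [he]
    calc ENNReal.ofReal ((1-α) * ((n:ℝ)+1)) ≤ ENNReal.ofReal (k:ℝ) := by
          apply ENNReal.ofReal_le_ofReal
          rw [hkdef]
          have := Nat.le_ceil ((1-α) * ((n:ℝ)+1))
          push_cast at this ⊢
          convert this using 2 <;> push_cast <;> ring
      _ = (k:ℝ≥0∞) := ENNReal.ofReal_natCast k
  have hne0 : ((n:ℝ≥0∞)+1) ≠ 0 := by simp
  have hnetop : ((n:ℝ≥0∞)+1) ≠ ⊤ := by
    simp [ENNReal.add_eq_top]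
  have h6 : ENNReal.ofReal (1-α) * ((n:ℝ≥0∞)+1) ≤ ℙ (A (Fin.last n)) * ((n:ℝ≥0∞)+1) := by
    calc ENNReal.ofReal (1-α) * ((n:ℝ≥0∞)+1) ≤ (k:ℝ≥0∞) := hfin
      _ ≤ ((n:ℝ≥0∞)+1) * ℙ (A (Fin.last n)) := hmain
      _ = ℙ (A (Fin.last n)) * ((n:ℝ≥0∞)+1) := mul_comm _ _
  exact (ENNReal.mul_le_mul_iff_left hne0 hnetop).1 h6
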